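/- Let n > k ≥ 1 be positive integers and write P_{n,k}(x−1) = ∑_{j=0}^{k} c_j x^j. Then for every j with 0 ≤ j ≤ k, c_j = ∑_{i=j}^{k} (−1)^{i−j} C(n,i) C(i,j) = (−1)^{k−j} C(n,j) C(n−j−1, k−j). -/

import Mathlib

open Polynomial

/-- `P n k` is the truncation of the binomial expansion of `(1+x)^n` at the `k`-th stage,
i.e. `∑_{j=0}^{k} C(n,j) x^j`, as a polynomial over `ℚ`. -/
noncomputable def P (n k : ℕ) : Polynomial ℚ :=
  ∑ j ∈ Finset.range (k + 1), Polynomial.C ((n.choose j : ℚ)) * Polynomial.X ^ j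

lemma alt_sum_choose (N : ℕ) (hN : 1 ≤ N) (M : ℕ) :
    ∑ m ∈ Finset.range (M + 1), (-1 : ℚ) ^ m * (N.choose m : ℚ)
      = (-1 : ℚ) ^ M * ((N - 1).choose M : ℚ) := by
  induction M with
  | zero => simp
  | succ M ih =>
    rw [Finset.sum_range_succ, ih]
    have h : N.choose (M + 1) = (N - 1).choose (M + 1) + (N - 1).choose M := by
      cases N with
      | zero => omega
      | succ N => rw [Nat.choose_succ_succ']; simp [Nat.add_comm]
    rw [h]
    push_cast
    ring

theorem coeff_of_shifted_truncated_binomial (n k : ℕ) (hk : 1 ≤ k) (hn : k < n)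
    (j : ℕ) (hj : j ≤ k) :
    ((P n k).comp (X - 1)).coeff j =
      ∑ i ∈ Finset.Icc j k, (-1 : ℚ) ^ (i - j) * (n.choose i : ℚ) * (i.choose j : ℚ) ∧
    ((P n k).comp (X - 1)).coeff j =
      (-1 : ℚ) ^ (k - j) * (n.choose j : ℚ) * ((n - j - 1).choose (k - j) : ℚ) := by
  have key : ((P n k).comp (X - 1)).coeff j =
      ∑ i ∈ Finset.Icc j k, (-1 : ℚ) ^ (i - j) * (n.choose i : ℚ) * (i.choose j : ℚ) := by
    have : (X - 1 : Polynomial ℚ) = X + C (-1) := by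
      simp [sub_eq_add_neg]
    rw [P, Polynomial.sum_comp, Polynomial.finset_sum_coeff]
    rw [show Finset.Icc j k = Finset.filter (fun i => j ≤ i) (Finset.range (k+1)) by
      ext i; simp [Finset.mem_Icc, Nat.lt_succ_iff, and_comm]]
    rw [Finset.sum_filter]
    apply Finset.sum_congr rfl
    intro i _
    rw [this]
    simp only [mul_comp, C_comp, X_pow_comp, pow_comp, X_comp, coeff_C_mul,
      coeff_X_add_C_pow]
    by_cases hji : j ≤ i
    · simp [hji]; ring
    · simp [hji, Nat.choose_eq_zero_of_lt (by omega : i < j)]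
  refine ⟨key, key.trans ?_⟩
  -- reindex: i = j + m
  have reindex : ∑ i ∈ Finset.Icc j k, (-1 : ℚ) ^ (i - j) * (n.choose i : ℚ) * (i.choose j : ℚ)
      = ∑ m ∈ Finset.range (k - j + 1),
          (-1 : ℚ) ^ m * (n.choose (j + m) : ℚ) * ((j + m).choose j : ℚ) := by
    rw [show Finset.Icc j k = Finset.map ⟨fun m => j + m, add_right_injective j⟩
        (Finset.range (k - j + 1)) by
      ext i
      simp only [Finset.mem_Icc, Finset.mem_map, Finset.mem_range, Function.Embedding.coeFn_mk]
      constructor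
      · rintro ⟨h1, h2⟩; exact ⟨i - j, by omega, by omega⟩
      · rintro ⟨m, hm, rfl⟩; omega]
    rw [Finset.sum_map]
    simp
  rw [reindex]
  have hc : ∀ m, m ≤ k - j → (n.choose (j + m) : ℚ) * ((j + m).choose j : ℚ)
      = (n.choose j : ℚ) * ((n - j).choose m : ℚ) := by
    intro m hm
    have h1 : j + m ≤ n := by omega
    have := Nat.choose_mul (n := n) (k := j + m) (s := j) (by omega)
    rw [Nat.add_sub_cancel_left] at this
    exact_mod_cast congrArg (fun x : ℕ => (x : ℚ)) this
  rw [Finset.sum_congr rfl (fun m hm => by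
    rw [mul_assoc, hc m (by simpa [Nat.lt_succ_iff] using hm), ← mul_assoc])]
  have : ∑ m ∈ Finset.range (k - j + 1), (-1:ℚ)^m * (n.choose j : ℚ) * ((n-j).choose m : ℚ)
      = (n.choose j : ℚ) * ∑ m ∈ Finset.range (k - j + 1), (-1:ℚ)^m * ((n-j).choose m : ℚ) := by
    rw [Finset.mul_sum]; apply Finset.sum_congr rfl; intros; ring
  rw [this, alt_sum_choose (n - j) (by omega)]
  have : n - j - 1 = n - j - 1 := rfl
  ring
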